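/- Let M be an Ag'-module. The subspace J = {Σ_s L_s ⊗ w_s ∈ g''⊗M : Σ_s L_{s+n} w_s = 0 for all n ∈ pℤ} is an Ag'-submodule of g'' ⊗ M (with the module structure of Lemma 3.4), and it is contained in the kernel of the g'-module homomorphism π: g''⊗M → M, L_s ⊗ w ↦ L_s w. -/
import Mathlib


-- The index `s + n` inside `{s : ℤ // s ∉ pℤ}` (for `n ∈ pℤ` the sum is again not in `pℤ`).
open Classical in
noncomputable def addIdx (p : ℕ) (s : {s : ℤ // ¬ (p : ℤ) ∣ s}) (n : ℤ) :
    {s : ℤ // ¬ (p : ℤ) ∣ s} :=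
  if h : ¬ (p : ℤ) ∣ (s.1 + n) then ⟨s.1 + n, h⟩ else s

-- The action of `t^n` on `g'' ⊗ M ≅ {s // s ∉ pℤ} →₀ M`: `t^n (L_s ⊗ w) = L_{s+n} ⊗ w`.
noncomputable def tOp (p : ℕ) (M : Type) [AddCommGroup M] [Module ℂ M] (n : ℤ) :
    Module.End ℂ ({s : ℤ // ¬ (p : ℤ) ∣ s} →₀ M) :=
  Finsupp.lsum ℂ fun s => Finsupp.lsingle (addIdx p s n)

-- The action of `L_a` on `g'' ⊗ M`: `a (L_s ⊗ w) = [a, L_s] ⊗ w + L_s ⊗ (a w)`.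
open Classical in
noncomputable def lOp (p : ℕ) (M : Type) [AddCommGroup M] [Module ℂ M]
    (L : ℤ → Module.End ℂ M) (m : ℤ) :
    Module.End ℂ ({s : ℤ // ¬ (p : ℤ) ∣ s} →₀ M) :=
  Finsupp.lsum ℂ fun s =>
    (if (p : ℤ) ∣ m then (s.1 : ℂ) • Finsupp.lsingle (addIdx p s m)
      else (0 : M →ₗ[ℂ] ({s : ℤ // ¬ (p : ℤ) ∣ s} →₀ M)))
    + (Finsupp.lsingle s).comp (L m : M →ₗ[ℂ] M)

-- The map `π : g'' ⊗ M → M`, `L_s ⊗ w ↦ L_s w`.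
noncomputable def piOp (p : ℕ) (M : Type) [AddCommGroup M] [Module ℂ M]
    (L : ℤ → Module.End ℂ M) : ({s : ℤ // ¬ (p : ℤ) ∣ s} →₀ M) →ₗ[ℂ] M :=
  Finsupp.lsum ℂ fun s => (L s.1 : M →ₗ[ℂ] M)

-- `J = {Σ_s L_s ⊗ w_s : Σ_s L_{s+n} w_s = 0 for all n ∈ pℤ}`; note that
-- `Σ_s L_{s+n} w_s = π (t^n v)` for `v = Σ_s L_s ⊗ w_s`.
noncomputable def Jsub (p : ℕ) (M : Type) [AddCommGroup M] [Module ℂ M]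
    (L : ℤ → Module.End ℂ M) : Submodule ℂ ({s : ℤ // ¬ (p : ℤ) ∣ s} →₀ M) :=
  ⨅ (n : ℤ) (_ : (p : ℤ) ∣ n),
    LinearMap.ker ((piOp p M L).comp (tOp p M n : _ →ₗ[ℂ] _))

/- ### Auxiliary lemmas -/

lemma addIdx_of_dvd (p : ℕ) (s : {s : ℤ // ¬ (p : ℤ) ∣ s}) {n : ℤ} (hn : (p : ℤ) ∣ n) :
    addIdx p s n = ⟨s.1 + n, fun h => s.2 (by simpa using dvd_sub h hn)⟩ := by
  rw [addIdx, dif_pos]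

lemma tOp_single (p : ℕ) (M : Type) [AddCommGroup M] [Module ℂ M] (n : ℤ)
    (s : {s : ℤ // ¬ (p : ℤ) ∣ s}) (w : M) :
    tOp p M n (Finsupp.single s w) = Finsupp.single (addIdx p s n) w := by
  simp [tOp]

lemma piOp_single (p : ℕ) (M : Type) [AddCommGroup M] [Module ℂ M]
    (L : ℤ → Module.End ℂ M) (s : {s : ℤ // ¬ (p : ℤ) ∣ s}) (w : M) :
    piOp p M L (Finsupp.single s w) = L s.1 w := by
  simp [piOp]

open Classical in
lemma lOp_single (p : ℕ) (M : Type) [AddCommGroup M] [Module ℂ M]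
    (L : ℤ → Module.End ℂ M) (a : ℤ) (s : {s : ℤ // ¬ (p : ℤ) ∣ s}) (w : M) :
    lOp p M L a (Finsupp.single s w) =
      (if (p : ℤ) ∣ a then (s.1 : ℂ) • Finsupp.single (addIdx p s a) w else 0)
      + Finsupp.single s (L a w) := by
  by_cases h : (p : ℤ) ∣ a <;> simp [lOp, h]

lemma tOp_zero (p : ℕ) (M : Type) [AddCommGroup M] [Module ℂ M] :
    tOp p M 0 = LinearMap.id := by
  apply Finsupp.lhom_ext
  intro s w
  rw [LinearMap.id_coe, id_eq]
  rw [show (tOp p M 0 : _ →ₗ[ℂ] _) (Finsupp.single s w) = _ from tOp_single p M 0 s w,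
    addIdx_of_dvd p s (dvd_zero _)]
  congr 1
  exact Subtype.ext (add_zero _)

lemma tOp_tOp (p : ℕ) (M : Type) [AddCommGroup M] [Module ℂ M] {m n : ℤ}
    (hm : (p : ℤ) ∣ m) (hn : (p : ℤ) ∣ n) :
    (tOp p M m : _ →ₗ[ℂ] _) ∘ₗ (tOp p M n : _ →ₗ[ℂ] _) = tOp p M (n + m) := by
  apply Finsupp.lhom_ext
  intro s w
  rw [LinearMap.comp_apply]
  rw [show (tOp p M n : _ →ₗ[ℂ] _) (Finsupp.single s w) = _ from tOp_single p M n s w,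
    show ∀ s', (tOp p M m : _ →ₗ[ℂ] _) (Finsupp.single s' w) = _ from fun s' => tOp_single p M m s' w,
    show (tOp p M (n+m) : _ →ₗ[ℂ] _) (Finsupp.single s w) = _ from tOp_single p M (n+m) s w]
  congr 1
  rw [addIdx_of_dvd p s hn, addIdx_of_dvd p _ hm, addIdx_of_dvd p s (dvd_add hn hm)]
  exact Subtype.ext (add_assoc _ _ _)

/-- key commutation: for `p ∣ n`, `p ∣ a`:
`π ∘ tⁿ ∘ Lₐ = L a ∘ π ∘ tⁿ - n • (π ∘ t^{a+n})`. -/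
lemma key_dvd (p : ℕ) (M : Type) [AddCommGroup M] [Module ℂ M]
    (L : ℤ → Module.End ℂ M)
    (hrep2 : ∀ m r : ℤ, (p : ℤ) ∣ m → ¬ (p : ℤ) ∣ r →
      L m * L r - L r * L m = (r : ℂ) • L (m + r))
    {a n : ℤ} (ha : (p : ℤ) ∣ a) (hn : (p : ℤ) ∣ n) :
    (piOp p M L) ∘ₗ (tOp p M n : _ →ₗ[ℂ] _) ∘ₗ (lOp p M L a : _ →ₗ[ℂ] _)
      = (L a : M →ₗ[ℂ] M) ∘ₗ (piOp p M L) ∘ₗ (tOp p M n : _ →ₗ[ℂ] _)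
        - (n : ℂ) • ((piOp p M L) ∘ₗ (tOp p M (a + n) : _ →ₗ[ℂ] _)) := by
  apply Finsupp.lhom_ext
  intro s w
  have hs : ¬ (p : ℤ) ∣ s.1 := s.2
  have hsn : ¬ (p : ℤ) ∣ (s.1 + n) := fun h => hs (by simpa using dvd_sub h hn)
  have hc := LinearMap.congr_fun (hrep2 a (s.1 + n) ha hsn) w
  simp only [LinearMap.sub_apply, LinearMap.smul_apply, Module.End.mul_apply] at hc
  simp only [LinearMap.comp_apply, LinearMap.sub_apply, LinearMap.smul_apply,
    lOp_single, if_pos ha, tOp_single, map_add, map_smul, piOp_single,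
    addIdx_of_dvd p s ha, addIdx_of_dvd p s hn, addIdx_of_dvd p _ hn,
    addIdx_of_dvd p s (dvd_add ha hn)]
  have e1 : s.1 + a + n = a + (s.1 + n) := by ring
  have e2 : s.1 + (a + n) = a + (s.1 + n) := by ring
  rw [e1, e2]
  have hsw : L (s.1 + n) (L a w)
      = L a (L (s.1 + n) w) - ((s.1 + n : ℤ) : ℂ) • L (a + (s.1 + n)) w := by
    rw [← hc]; abel
  rw [hsw]
  push_cast
  module

/-- key commutation: for `p ∣ n`, `¬ p ∣ a`: `π ∘ tⁿ ∘ Lₐ = L a ∘ π ∘ tⁿ`. -/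
lemma key_ndvd (p : ℕ) (M : Type) [AddCommGroup M] [Module ℂ M]
    (L : ℤ → Module.End ℂ M)
    (hrep3 : ∀ r s : ℤ, ¬ (p : ℤ) ∣ r → ¬ (p : ℤ) ∣ s → L r * L s - L s * L r = 0)
    {a n : ℤ} (ha : ¬ (p : ℤ) ∣ a) (hn : (p : ℤ) ∣ n) :
    (piOp p M L) ∘ₗ (tOp p M n : _ →ₗ[ℂ] _) ∘ₗ (lOp p M L a : _ →ₗ[ℂ] _)
      = (L a : M →ₗ[ℂ] M) ∘ₗ (piOp p M L) ∘ₗ (tOp p M n : _ →ₗ[ℂ] _) := by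
  apply Finsupp.lhom_ext
  intro s w
  have hsn : ¬ (p : ℤ) ∣ (s.1 + n) := fun h => s.2 (by simpa using dvd_sub h hn)
  have hc := LinearMap.congr_fun (hrep3 a (s.1 + n) ha hsn) w
  simp only [LinearMap.sub_apply, LinearMap.zero_apply, Module.End.mul_apply,
    sub_eq_zero] at hc
  simp only [LinearMap.comp_apply, lOp_single, if_neg ha, tOp_single, map_add,
    zero_add, piOp_single, addIdx_of_dvd p s hn]
  exact hc.symm

lemma mem_Jsub_iff (p : ℕ) (M : Type) [AddCommGroup M] [Module ℂ M]
    (L : ℤ → Module.End ℂ M) (v : {s : ℤ // ¬ (p : ℤ) ∣ s} →₀ M) :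
    v ∈ Jsub p M L ↔ ∀ n : ℤ, (p : ℤ) ∣ n → piOp p M L (tOp p M n v) = 0 := by
  simp [Jsub, Submodule.mem_iInf, LinearMap.mem_ker]

/-- Lemma 3.5: `J` is an `Ag'`-submodule of `g'' ⊗ M`, and it is contained in the kernel of
the `g'`-module homomorphism `π : g'' ⊗ M → M`, `L_s ⊗ w ↦ L_s w`. -/
theorem stmt_10 (p : ℕ) (hp : 1 < p) (M : Type) [AddCommGroup M] [Module ℂ M]
    (L T : ℤ → Module.End ℂ M)
    (hrep1 : ∀ m n : ℤ, (p : ℤ) ∣ m → (p : ℤ) ∣ n →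
      L m * L n - L n * L m = (n - m : ℂ) • L (m + n))
    (hrep2 : ∀ m r : ℤ, (p : ℤ) ∣ m → ¬ (p : ℤ) ∣ r →
      L m * L r - L r * L m = (r : ℂ) • L (m + r))
    (hrep3 : ∀ r s : ℤ, ¬ (p : ℤ) ∣ r → ¬ (p : ℤ) ∣ s → L r * L s - L s * L r = 0)
    (hA : ∀ m n : ℤ, (p : ℤ) ∣ m → (p : ℤ) ∣ n → T m * T n = T (m + n))
    (hcomp1 : ∀ m n : ℤ, (p : ℤ) ∣ m → (p : ℤ) ∣ n →
      L m * T n - T n * L m = (n : ℂ) • T (m + n))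
    (hcomp2 : ∀ n r : ℤ, (p : ℤ) ∣ n → ¬ (p : ℤ) ∣ r → T n * L r = L r * T n) :
    (∀ v, v ∈ Jsub p M L ↔
      ∀ n : ℤ, (p : ℤ) ∣ n → piOp p M L (tOp p M n v) = 0) ∧
    (∀ (a : ℤ) (v), v ∈ Jsub p M L → lOp p M L a v ∈ Jsub p M L) ∧
    (∀ n : ℤ, (p : ℤ) ∣ n → ∀ v ∈ Jsub p M L, tOp p M n v ∈ Jsub p M L) ∧
    (∀ (a : ℤ) (v), piOp p M L (lOp p M L a v) = L a (piOp p M L v)) ∧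
    Jsub p M L ≤ LinearMap.ker (piOp p M L) := by
  refine ⟨mem_Jsub_iff p M L, ?_, ?_, ?_, ?_⟩
  · -- stability under lOp
    intro a v hv
    rw [mem_Jsub_iff] at hv ⊢
    intro n hn
    by_cases ha : (p : ℤ) ∣ a
    · have := LinearMap.congr_fun (key_dvd p M L hrep2 ha hn) v
      simp only [LinearMap.comp_apply, LinearMap.sub_apply, LinearMap.smul_apply] at this
      rw [this, hv n hn, hv (a + n) (dvd_add ha hn), map_zero, smul_zero, sub_zero]
    · have := LinearMap.congr_fun (key_ndvd p M L hrep3 ha hn) v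
      simp only [LinearMap.comp_apply] at this
      rw [this, hv n hn, map_zero]
  · -- stability under tOp
    intro n hn v hv
    rw [mem_Jsub_iff] at hv ⊢
    intro m hm
    have := LinearMap.congr_fun (tOp_tOp p M hm hn) v
    simp only [LinearMap.comp_apply] at this
    rw [this, hv (n + m) (dvd_add hn hm)]
  · -- π is equivariant for lOp
    intro a v
    by_cases ha : (p : ℤ) ∣ a
    · have := LinearMap.congr_fun (key_dvd p M L hrep2 ha (dvd_zero _)) v
      simp only [LinearMap.comp_apply, LinearMap.sub_apply, LinearMap.smul_apply,
        tOp_zero, LinearMap.id_coe, id_eq, Int.cast_zero, zero_smul, sub_zero] at this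
      simpa using this
    · have := LinearMap.congr_fun (key_ndvd p M L hrep3 ha (dvd_zero _)) v
      simp only [LinearMap.comp_apply, tOp_zero, LinearMap.id_coe, id_eq] at this
      exact this
  · -- J ⊆ ker π
    intro v hv
    rw [mem_Jsub_iff] at hv
    have := hv 0 (dvd_zero _)
    rw [tOp_zero] at this
    simpa using this
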